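/- arXiv:2002.07324 — 3 statements merged into one kernel-verified Lean document; each statement's English description precedes it below -/
import Mathlib

section
/- Let Δ and K be positive definite p×p real symmetric matrices with K' positive definite and K ≻ K' (K - K' positive definite). Then ((Δ + K')^{-1} + (K - K')^{-1})^{-1} = K' (Δ^{-1} + K'^{-1}) [ (Δ^{-1} + K^{-1})^{-1} - (Δ^{-1} + K'^{-1})^{-1} ] (Δ^{-1} + K'^{-1}) K'. -/
open Matrix

lemma add_inv_aux {n : Type*} [Fintype n] [DecidableEq n]
    (A B : Matrix n n ℝ) (hA : IsUnit A.det) (hB : IsUnit B.det) :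
    A⁻¹ + B⁻¹ = A⁻¹ * (A + B) * B⁻¹ := by
  rw [mul_add, add_mul, Matrix.nonsing_inv_mul _ hA, mul_assoc,
    Matrix.mul_nonsing_inv _ hB, one_mul, mul_one, add_comm]

lemma inv_add_inv_aux {n : Type*} [Fintype n] [DecidableEq n]
    (A B : Matrix n n ℝ) (hA : IsUnit A.det) (hB : IsUnit B.det) :
    (A⁻¹ + B⁻¹)⁻¹ = B * (A + B)⁻¹ * A := by
  rw [add_inv_aux A B hA hB, Matrix.mul_inv_rev, Matrix.mul_inv_rev,
    Matrix.nonsing_inv_nonsing_inv _ hA, Matrix.nonsing_inv_nonsing_inv _ hB, mul_assoc]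

/-- Woodbury-based identity:
`((Δ + K')⁻¹ + (K - K')⁻¹)⁻¹ = K' (Δ⁻¹ + K'⁻¹) [(Δ⁻¹ + K⁻¹)⁻¹ - (Δ⁻¹ + K'⁻¹)⁻¹] (Δ⁻¹ + K'⁻¹) K'`. -/
theorem stmt1 {p : ℕ} (Δ K K' : Matrix (Fin p) (Fin p) ℝ)
    (hΔ : Δ.PosDef) (hK : K.PosDef) (hK' : K'.PosDef) (hdeg : (K - K').PosDef) :
    ((Δ + K')⁻¹ + (K - K')⁻¹)⁻¹ =
      K' * (Δ⁻¹ + K'⁻¹) * ((Δ⁻¹ + K⁻¹)⁻¹ - (Δ⁻¹ + K'⁻¹)⁻¹) * (Δ⁻¹ + K'⁻¹) * K' := by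
  have hS : (Δ + K).PosDef := hΔ.add hK
  have hS' : (Δ + K').PosDef := hΔ.add hK'
  have uΔ : IsUnit Δ.det := hΔ.det_pos.ne'.isUnit
  have uK : IsUnit K.det := hK.det_pos.ne'.isUnit
  have uK' : IsUnit K'.det := hK'.det_pos.ne'.isUnit
  have uS : IsUnit (Δ + K).det := hS.det_pos.ne'.isUnit
  have uS' : IsUnit (Δ + K').det := hS'.det_pos.ne'.isUnit
  have ud : IsUnit (K - K').det := hdeg.det_pos.ne'.isUnit
  have h1 : ((Δ + K')⁻¹ + (K - K')⁻¹)⁻¹ = (K - K') * (Δ + K)⁻¹ * (Δ + K') := by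
    have := inv_add_inv_aux (Δ + K') (K - K') uS' ud
    rwa [show Δ + K' + (K - K') = Δ + K by abel] at this
  have h2 : (Δ⁻¹ + K⁻¹)⁻¹ = K * (Δ + K)⁻¹ * Δ := inv_add_inv_aux Δ K uΔ uK
  have h3 : (Δ⁻¹ + K'⁻¹)⁻¹ = K' * (Δ + K')⁻¹ * Δ := inv_add_inv_aux Δ K' uΔ uK'
  have h4 : K' * (Δ⁻¹ + K'⁻¹) = (Δ + K') * Δ⁻¹ := by
    rw [mul_add, Matrix.mul_nonsing_inv _ uK', add_mul,
      Matrix.mul_nonsing_inv _ uΔ, add_comm]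
  have h5 : (Δ⁻¹ + K'⁻¹) * K' = Δ⁻¹ * (Δ + K') := by
    rw [add_mul, Matrix.nonsing_inv_mul _ uK', mul_add,
      Matrix.nonsing_inv_mul _ uΔ, add_comm]
  rw [h1, h2, h3]
  rw [show K' * (Δ⁻¹ + K'⁻¹) * (K * (Δ + K)⁻¹ * Δ - K' * (Δ + K')⁻¹ * Δ) * (Δ⁻¹ + K'⁻¹) * K'
      = K' * (Δ⁻¹ + K'⁻¹) * ((K * (Δ + K)⁻¹ * Δ - K' * (Δ + K')⁻¹ * Δ) * ((Δ⁻¹ + K'⁻¹) * K')) by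
    noncomm_ring]
  rw [h4, h5]
  have hKS : K * (Δ + K)⁻¹ = 1 - Δ * (Δ + K)⁻¹ := by
    rw [eq_sub_iff_add_eq, ← add_mul, add_comm K Δ, Matrix.mul_nonsing_inv _ uS]
  have hKS' : K' * (Δ + K')⁻¹ = 1 - Δ * (Δ + K')⁻¹ := by
    rw [eq_sub_iff_add_eq, ← add_mul, add_comm K' Δ, Matrix.mul_nonsing_inv _ uS']
  have hd : K - K' = (Δ + K) - (Δ + K') := by abel
  rw [hKS, hKS', hd]
  have e1 : ((Δ + K) - (Δ + K')) * (Δ + K)⁻¹ * (Δ + K')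
      = (Δ + K') - (Δ + K') * (Δ + K)⁻¹ * (Δ + K') := by
    rw [sub_mul, sub_mul, Matrix.mul_nonsing_inv _ uS, one_mul]
  rw [e1]
  have e2 : (1 - Δ * (Δ + K)⁻¹) * Δ - (1 - Δ * (Δ + K')⁻¹) * Δ
      = Δ * ((Δ + K')⁻¹ - (Δ + K)⁻¹) * Δ := by noncomm_ring
  rw [e2]
  symm
  calc (Δ + K') * Δ⁻¹ * (Δ * ((Δ + K')⁻¹ - (Δ + K)⁻¹) * Δ * (Δ⁻¹ * (Δ + K')))
      = (Δ + K') * (Δ⁻¹ * Δ) * ((Δ + K')⁻¹ - (Δ + K)⁻¹) * (Δ * Δ⁻¹) * (Δ + K') := by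
        noncomm_ring
    _ = (Δ + K') * ((Δ + K')⁻¹ - (Δ + K)⁻¹) * (Δ + K') := by
        rw [Matrix.nonsing_inv_mul _ uΔ, Matrix.mul_nonsing_inv _ uΔ, mul_one, mul_one]
    _ = (Δ + K') - (Δ + K') * (Δ + K)⁻¹ * (Δ + K') := by
        rw [mul_sub, Matrix.mul_nonsing_inv _ uS', sub_mul, one_mul]
end

section
/- Let γ ∈ (0,1) and Δ_i, K_i positive definite p×p symmetric matrices. With Σ(γ) the block matrix with blocks (γ/(1-γ))Δ_i, -Δ_i, -Δ_i, ((1-γ)/γ)(Δ_i+K_i), its entrywise derivative in γ is the block-diagonal matrix diag((1/(1-γ)²)Δ_i, -(1/γ²)(Δ_i+K_i)), and trace((dΣ/dγ) Σ(γ)^{-1}) = 0. -/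
open Matrix

lemma trace_fromBlocks_aux {p : ℕ} (A B C D : Matrix (Fin p) (Fin p) ℝ) :
    (Matrix.fromBlocks A B C D).trace = A.trace + D.trace := by
  simp [Matrix.trace, Fintype.sum_sum_type, Matrix.fromBlocks, Matrix.diag]

/-- The entrywise derivative in `γ` of
`Σ(γ) = fromBlocks ((γ/(1-γ))Δ) (-Δ) (-Δ) (((1-γ)/γ)(Δ+K))` is the block-diagonal matrix
`diag((1/(1-γ)²)Δ, -(1/γ²)(Δ+K))`, and `trace((dΣ/dγ) Σ(γ)⁻¹) = 0`. -/
theorem stmt4 {p : ℕ} (γ : ℝ) (hγ : γ ∈ Set.Ioo (0 : ℝ) 1)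
    (Δ K : Matrix (Fin p) (Fin p) ℝ) (hΔ : Δ.PosDef) (hK : K.PosDef) :
    (∀ i j : Fin p ⊕ Fin p,
      HasDerivAt
        (fun t : ℝ =>
          Matrix.fromBlocks ((t / (1 - t)) • Δ) (-Δ) (-Δ) (((1 - t) / t) • (Δ + K)) i j)
        (Matrix.fromBlocks ((1 / (1 - γ) ^ 2) • Δ) 0 0 (-(1 / γ ^ 2) • (Δ + K)) i j) γ) ∧
    Matrix.trace
      (Matrix.fromBlocks ((1 / (1 - γ) ^ 2) • Δ) 0 0 (-(1 / γ ^ 2) • (Δ + K)) *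
        (Matrix.fromBlocks ((γ / (1 - γ)) • Δ) (-Δ) (-Δ) (((1 - γ) / γ) • (Δ + K)))⁻¹) = 0 := by
  obtain ⟨hγ0, hγ1⟩ := hγ
  have h1γ : (1 : ℝ) - γ ≠ 0 := by linarith
  have hγne : γ ≠ 0 := ne_of_gt hγ0
  have e1 : Δ * Δ⁻¹ = 1 := Δ.mul_nonsing_inv (isUnit_iff_ne_zero.mpr hΔ.det_pos.ne')
  have e2 : K * K⁻¹ = 1 := K.mul_nonsing_inv (isUnit_iff_ne_zero.mpr hK.det_pos.ne')
  constructor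
  · have d1 : HasDerivAt (fun t : ℝ => t / (1 - t)) (1 / (1 - γ) ^ 2) γ := by
      have h := (hasDerivAt_id γ).div ((hasDerivAt_const γ (1 : ℝ)).sub (hasDerivAt_id γ)) h1γ
      refine h.congr_deriv ?_
      simp only [Pi.sub_apply, id]
      field_simp
      ring
    have d2 : HasDerivAt (fun t : ℝ => (1 - t) / t) (-(1 / γ ^ 2)) γ := by
      have h := ((hasDerivAt_const γ (1 : ℝ)).sub (hasDerivAt_id γ)).div (hasDerivAt_id γ) hγne
      refine h.congr_deriv ?_
      simp only [Pi.sub_apply, id]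
      field_simp
      ring
    rintro (i | i) (j | j)
    · simp only [Matrix.fromBlocks_apply₁₁, Matrix.smul_apply, smul_eq_mul]
      exact d1.mul_const (Δ i j)
    · simp only [Matrix.fromBlocks_apply₁₂, Matrix.zero_apply]
      simpa using hasDerivAt_const γ ((-Δ) i j)
    · simp only [Matrix.fromBlocks_apply₂₁, Matrix.zero_apply]
      simpa using hasDerivAt_const γ ((-Δ) i j)
    · simp only [Matrix.fromBlocks_apply₂₂, Matrix.smul_apply, smul_eq_mul]
      exact d2.mul_const ((Δ + K) i j)
  · have hs : γ / (1 - γ) * ((1 - γ) / γ) = 1 := by field_simp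
    have hs' : (1 - γ) / γ * (γ / (1 - γ)) = 1 := by field_simp
    have b11 : (γ / (1 - γ)) • Δ * (((1 - γ) / γ) • (Δ⁻¹ + K⁻¹)) + (-Δ) * K⁻¹ = 1 := by
      rw [smul_mul_assoc, mul_smul_comm, smul_smul, hs, one_smul, mul_add, e1]
      simp [Matrix.neg_mul]
    have b12 : (γ / (1 - γ)) • Δ * K⁻¹ + (-Δ) * ((γ / (1 - γ)) • K⁻¹) = 0 := by
      rw [smul_mul_assoc, mul_smul_comm]
      simp [Matrix.neg_mul]
    have b21 : (-Δ) * (((1 - γ) / γ) • (Δ⁻¹ + K⁻¹)) +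
        (((1 - γ) / γ) • (Δ + K)) * K⁻¹ = 0 := by
      rw [Matrix.neg_mul, mul_smul_comm, smul_mul_assoc, mul_add, add_mul, e1, e2]
      rw [smul_add, smul_add, ← neg_smul_neg]
      abel_nf
    have b22 : (-Δ) * K⁻¹ + (((1 - γ) / γ) • (Δ + K)) * ((γ / (1 - γ)) • K⁻¹) = 1 := by
      rw [smul_mul_assoc, mul_smul_comm, smul_smul, hs', one_smul, add_mul, e2]
      simp [Matrix.neg_mul]
    have hinv : (Matrix.fromBlocks ((γ / (1 - γ)) • Δ) (-Δ) (-Δ)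
        (((1 - γ) / γ) • (Δ + K)))⁻¹ =
        Matrix.fromBlocks (((1 - γ) / γ) • (Δ⁻¹ + K⁻¹)) K⁻¹ K⁻¹ ((γ / (1 - γ)) • K⁻¹) := by
      apply Matrix.inv_eq_right_inv
      rw [Matrix.fromBlocks_multiply, b11, b12, b21, b22, Matrix.fromBlocks_one]
    rw [hinv, Matrix.fromBlocks_multiply, trace_fromBlocks_aux]
    simp only [Matrix.zero_mul, add_zero, zero_add]
    rw [smul_mul_assoc, mul_smul_comm, smul_smul, Matrix.trace_smul,
      smul_mul_assoc, mul_smul_comm, smul_smul, Matrix.trace_smul]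
    rw [mul_add, Matrix.trace_add, add_mul, Matrix.trace_add, e1]
    have hKK : Matrix.trace (K * K⁻¹) = (p : ℝ) := by rw [e2]; simp
    have hKΔ : Matrix.trace (Δ * K⁻¹) = Matrix.trace (K⁻¹ * Δ) :=
      Matrix.trace_mul_comm _ _
    simp only [smul_eq_mul, Matrix.trace_one, Fintype.card_fin, hKK, ← hKΔ]
    field_simp
    ring
end

section
/- Let K_0, K_i, K_{i+1}, Δ_i, D_i be positive definite p×p symmetric matrices with K_i ≻ K_{i+1} and Δ_i^{-1} + K_i^{-1} ⪰ D_i^{-1}. Then ((Δ_i + K_{i+1})^{-1} + (K_i − K_{i+1})^{-1})^{-1} ⪯ (K_i − K_{i+1}) K_i^{-1} (D_i + (K_{i+1}^{-1} − K_i^{-1})^{-1}) K_i^{-1} (K_i − K_{i+1}). -/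
open Matrix

/-- `(A⁻¹ + B⁻¹)⁻¹ = B * (A + B)⁻¹ * A` for invertible matrices. -/
lemma sum_inv_inv {p : ℕ} (A B : Matrix (Fin p) (Fin p) ℝ) [Invertible A] [Invertible B] :
    (A⁻¹ + B⁻¹)⁻¹ = B * (A + B)⁻¹ * A := by
  have decomp : A⁻¹ + B⁻¹ = A⁻¹ * (A + B) * B⁻¹ := by
    rw [Matrix.mul_add, Matrix.inv_mul_of_invertible, Matrix.add_mul, Matrix.one_mul,
      Matrix.mul_assoc, Matrix.mul_inv_of_invertible, Matrix.mul_one, add_comm]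
  rw [decomp, Matrix.mul_inv_rev, Matrix.mul_inv_rev, Matrix.inv_inv_of_invertible,
    Matrix.inv_inv_of_invertible, Matrix.mul_assoc]

/-- `(A⁻¹ - B⁻¹)⁻¹ = B * (B - A)⁻¹ * A` for invertible matrices. -/
lemma diff_inv_inv {p : ℕ} (A B : Matrix (Fin p) (Fin p) ℝ) [Invertible A] [Invertible B] :
    (A⁻¹ - B⁻¹)⁻¹ = B * (B - A)⁻¹ * A := by
  have decomp : A⁻¹ - B⁻¹ = A⁻¹ * (B - A) * B⁻¹ := by
    rw [Matrix.mul_sub, Matrix.inv_mul_of_invertible, Matrix.sub_mul, Matrix.one_mul,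
      Matrix.mul_assoc, Matrix.mul_inv_of_invertible, Matrix.mul_one]
  rw [decomp, Matrix.mul_inv_rev, Matrix.mul_inv_rev, Matrix.inv_inv_of_invertible,
    Matrix.inv_inv_of_invertible, Matrix.mul_assoc]

/-- Inverse antitonicity: if `A, B` are positive definite and `A - B` is PSD,
then `B⁻¹ - A⁻¹` is PSD. -/
lemma inv_antitone_psd {p : ℕ} {A B : Matrix (Fin p) (Fin p) ℝ}
    (hA : A.PosDef) (hB : B.PosDef) (h : (A - B).PosSemidef) :
    (B⁻¹ - A⁻¹).PosSemidef := by
  haveI := hA.isUnit.invertible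
  haveI := hB.isUnit.invertible
  have hCH : (A - B)ᴴ = A - B := h.isHermitian
  have expand : A * (B⁻¹ - A⁻¹) * A = (A - B) + (A - B) * B⁻¹ * (A - B) := by
    simp only [Matrix.mul_sub, Matrix.sub_mul, Matrix.mul_add, Matrix.add_mul,
      Matrix.mul_assoc, Matrix.mul_inv_cancel_left_of_invertible,
      Matrix.inv_mul_cancel_left_of_invertible, Matrix.mul_inv_of_invertible,
      Matrix.inv_mul_of_invertible, Matrix.mul_one, Matrix.one_mul]
    abel
  have key : B⁻¹ - A⁻¹ = (A⁻¹)ᴴ * ((A - B) + (A - B) * B⁻¹ * (A - B)) * A⁻¹ := by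
    rw [(hA.isHermitian.inv).eq, ← expand]
    simp only [Matrix.mul_assoc, Matrix.inv_mul_cancel_left_of_invertible,
      Matrix.mul_inv_of_invertible, Matrix.mul_one]
  rw [key]
  have h1 : ((A - B) * B⁻¹ * (A - B)).PosSemidef := by
    have := (hB.inv.posSemidef).conjTranspose_mul_mul_same (A - B)
    rwa [hCH] at this
  exact (h.add h1).conjTranspose_mul_mul_same A⁻¹

/-- Loewner bound:
`((Δ + K₊)⁻¹ + (K - K₊)⁻¹)⁻¹ ⪯ (K - K₊) K⁻¹ (D + (K₊⁻¹ - K⁻¹)⁻¹) K⁻¹ (K - K₊)`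
under `K ≻ K₊ ≻ 0` and `Δ⁻¹ + K⁻¹ ⪰ D⁻¹`. -/
theorem stmt12 {p : ℕ} (K0 Ki Ki1 Δ D : Matrix (Fin p) (Fin p) ℝ)
    (hK0 : K0.PosDef) (hKi : Ki.PosDef) (hKi1 : Ki1.PosDef) (hΔ : Δ.PosDef) (hD : D.PosDef)
    (hdeg : (Ki - Ki1).PosDef) (hdist : (Δ⁻¹ + Ki⁻¹ - D⁻¹).PosSemidef) :
    ((Ki - Ki1) * Ki⁻¹ * (D + (Ki1⁻¹ - Ki⁻¹)⁻¹) * Ki⁻¹ * (Ki - Ki1) -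
      ((Δ + Ki1)⁻¹ + (Ki - Ki1)⁻¹)⁻¹).PosSemidef := by
  haveI := hKi.isUnit.invertible
  haveI := hKi1.isUnit.invertible
  haveI := hΔ.isUnit.invertible
  haveI := hD.isUnit.invertible
  haveI := hdeg.isUnit.invertible
  have hS : (Δ + Ki).PosDef := hΔ.add hKi
  haveI := hS.isUnit.invertible
  have hA1 : (Δ + Ki1).PosDef := hΔ.add hKi1
  haveI := hA1.isUnit.invertible
  have hE : (Δ⁻¹ + Ki⁻¹).PosDef := hΔ.inv.add hKi.inv
  haveI := hE.isUnit.invertible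
  -- Identity 1: LHS inverse
  have id1 : ((Δ + Ki1)⁻¹ + (Ki - Ki1)⁻¹)⁻¹ = (Ki - Ki1) * (Δ + Ki)⁻¹ * (Δ + Ki1) := by
    rw [sum_inv_inv (Δ + Ki1) (Ki - Ki1),
      show (Δ + Ki1) + (Ki - Ki1) = Δ + Ki from by abel]
  -- Identity 2
  have id2 : (Ki1⁻¹ - Ki⁻¹)⁻¹ = Ki * (Ki - Ki1)⁻¹ * Ki1 := diff_inv_inv Ki1 Ki
  -- Identity 3
  have id3 : (Δ⁻¹ + Ki⁻¹)⁻¹ = Ki * (Δ + Ki)⁻¹ * Δ := sum_inv_inv Δ Ki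
  -- PSD core: D - (Δ⁻¹+Ki⁻¹)⁻¹ is PSD
  have hcore : (D - (Δ⁻¹ + Ki⁻¹)⁻¹).PosSemidef := by
    have := inv_antitone_psd hE hD.inv hdist
    rwa [Matrix.inv_inv_of_invertible] at this
  -- cancellation pieces
  have T1 : (Ki - Ki1) * Ki⁻¹ * (Ki * (Ki - Ki1)⁻¹ * Ki1) * Ki⁻¹ * (Ki - Ki1)
      = (Ki - Ki1) * (Ki⁻¹ * Ki1) := by
    calc (Ki - Ki1) * Ki⁻¹ * (Ki * (Ki - Ki1)⁻¹ * Ki1) * Ki⁻¹ * (Ki - Ki1)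
        = (Ki - Ki1) * (Ki⁻¹ * (Ki * ((Ki - Ki1)⁻¹ * (Ki1 * (Ki⁻¹ * (Ki - Ki1)))))) := by
          simp only [Matrix.mul_assoc]
      _ = (Ki - Ki1) * ((Ki - Ki1)⁻¹ * (Ki1 * (Ki⁻¹ * (Ki - Ki1)))) := by
          rw [Matrix.inv_mul_cancel_left_of_invertible]
      _ = Ki1 * (Ki⁻¹ * (Ki - Ki1)) := by rw [Matrix.mul_inv_cancel_left_of_invertible]
      _ = (Ki - Ki1) * (Ki⁻¹ * Ki1) := by
          simp only [Matrix.mul_sub, Matrix.sub_mul, Matrix.mul_assoc,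
            Matrix.mul_inv_cancel_left_of_invertible,
            Matrix.inv_mul_cancel_left_of_invertible, Matrix.mul_inv_of_invertible,
            Matrix.inv_mul_of_invertible, Matrix.mul_one, Matrix.one_mul]
  have T2 : (Ki - Ki1) * Ki⁻¹ * (Ki * (Δ + Ki)⁻¹ * Δ) * Ki⁻¹ * (Ki - Ki1)
      = (Ki - Ki1) * ((Δ + Ki)⁻¹ * (Δ * (Ki⁻¹ * (Ki - Ki1)))) := by
    calc (Ki - Ki1) * Ki⁻¹ * (Ki * (Δ + Ki)⁻¹ * Δ) * Ki⁻¹ * (Ki - Ki1)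
        = (Ki - Ki1) * (Ki⁻¹ * (Ki * ((Δ + Ki)⁻¹ * (Δ * (Ki⁻¹ * (Ki - Ki1)))))) := by
          simp only [Matrix.mul_assoc]
      _ = (Ki - Ki1) * ((Δ + Ki)⁻¹ * (Δ * (Ki⁻¹ * (Ki - Ki1)))) := by
          rw [Matrix.inv_mul_cancel_left_of_invertible]
  -- core identity
  have core : Ki⁻¹ * Ki1 + (Δ + Ki)⁻¹ * (Δ * (Ki⁻¹ * (Ki - Ki1))) = (Δ + Ki)⁻¹ * (Δ + Ki1) := by
    apply Matrix.mul_right_injective_of_invertible (A := Δ + Ki)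
    show (Δ + Ki) * (Ki⁻¹ * Ki1 + (Δ + Ki)⁻¹ * (Δ * (Ki⁻¹ * (Ki - Ki1))))
        = (Δ + Ki) * ((Δ + Ki)⁻¹ * (Δ + Ki1))
    rw [Matrix.mul_add, Matrix.mul_inv_cancel_left_of_invertible,
      Matrix.mul_inv_cancel_left_of_invertible]
    simp only [Matrix.mul_sub, Matrix.sub_mul, Matrix.mul_add, Matrix.add_mul,
      Matrix.mul_assoc, Matrix.mul_inv_cancel_left_of_invertible,
      Matrix.inv_mul_cancel_left_of_invertible, Matrix.mul_inv_of_invertible,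
      Matrix.inv_mul_of_invertible, Matrix.mul_one, Matrix.one_mul]
    abel
  have rhs_eq : (Ki - Ki1) * Ki⁻¹ * (Ki * (Ki - Ki1)⁻¹ * Ki1) * Ki⁻¹ * (Ki - Ki1)
      + (Ki - Ki1) * Ki⁻¹ * (Ki * (Δ + Ki)⁻¹ * Δ) * Ki⁻¹ * (Ki - Ki1)
      = (Ki - Ki1) * (Δ + Ki)⁻¹ * (Δ + Ki1) := by
    rw [T1, T2, ← Matrix.mul_add, core, Matrix.mul_assoc]
  -- Main algebraic identity
  have main : (Ki - Ki1) * Ki⁻¹ * (D + (Ki1⁻¹ - Ki⁻¹)⁻¹) * Ki⁻¹ * (Ki - Ki1) -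
      ((Δ + Ki1)⁻¹ + (Ki - Ki1)⁻¹)⁻¹
      = (Ki - Ki1) * Ki⁻¹ * (D - (Δ⁻¹ + Ki⁻¹)⁻¹) * Ki⁻¹ * (Ki - Ki1) := by
    rw [id1, id2, id3, ← rhs_eq]
    noncomm_ring
  rw [main]
  have hH : (Ki⁻¹ * (Ki - Ki1))ᴴ = (Ki - Ki1) * Ki⁻¹ := by
    rw [conjTranspose_mul, hdeg.isHermitian.eq, hKi.isHermitian.inv.eq]
  have := hcore.conjTranspose_mul_mul_same (Ki⁻¹ * (Ki - Ki1))
  rw [hH] at this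
  simpa [Matrix.mul_assoc] using this
end
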